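/- Fix a < b, x ∈ [a,b], and μ ∈ ℝ with μ ≠ 0. Consider sequences λ₀ⁿ, λ₁ⁿ, c₀ⁿ, c₁ⁿ → +∞ with λ₀ⁿ/(c₀ⁿ)² → 1, λ₁ⁿ/(c₁ⁿ)² → 1 and (1/2)(λ₁ⁿ/c₁ⁿ − λ₀ⁿ/c₀ⁿ) → μ. Then uₙ(x) := (1/2)·((λ₁ⁿc₀ⁿ + λ₀ⁿc₁ⁿ)·e^{μₙ x} − 2λ₁ⁿc₀ⁿ·e^{μₙ a})/(λ₀ⁿc₁ⁿ·e^{μₙ b} − λ₁ⁿc₀ⁿ·e^{μₙ a}), where μₙ = λ₀ⁿ/c₀ⁿ − λ₁ⁿ/c₁ⁿ, converges to (e^{−2μx} − e^{−2μa})/(e^{−2μb} − e^{−2μa}). -/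

import Mathlib

open Filter

set_option maxHeartbeats 1000000 in
theorem stmt_11 (a b x mu : ℝ) (hab : a < b) (hx : x ∈ Set.Icc a b) (hmu : mu ≠ 0)
    (l0 l1 c0 c1 : ℕ → ℝ)
    (hl0 : Tendsto l0 atTop atTop) (hl1 : Tendsto l1 atTop atTop)
    (hc0 : Tendsto c0 atTop atTop) (hc1 : Tendsto c1 atTop atTop)
    (hr0 : Tendsto (fun n => l0 n / (c0 n) ^ 2) atTop (nhds 1))
    (hr1 : Tendsto (fun n => l1 n / (c1 n) ^ 2) atTop (nhds 1))
    (hdrift : Tendsto (fun n => (1 / 2) * (l1 n / c1 n - l0 n / c0 n)) atTop (nhds mu)) :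
    Tendsto (fun n =>
        (1 / 2) * ((l1 n * c0 n + l0 n * c1 n) * Real.exp ((l0 n / c0 n - l1 n / c1 n) * x)
          - 2 * l1 n * c0 n * Real.exp ((l0 n / c0 n - l1 n / c1 n) * a)) /
        (l0 n * c1 n * Real.exp ((l0 n / c0 n - l1 n / c1 n) * b)
          - l1 n * c0 n * Real.exp ((l0 n / c0 n - l1 n / c1 n) * a)))
      atTop
      (nhds ((Real.exp (-2 * mu * x) - Real.exp (-2 * mu * a)) /
        (Real.exp (-2 * mu * b) - Real.exp (-2 * mu * a)))) := by
  set m : ℕ → ℝ := fun n => l0 n / c0 n - l1 n / c1 n with hmdef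
  -- limit of m
  have hmlim : Tendsto m atTop (nhds (-2 * mu)) := by
    have h := hdrift.const_mul (-2)
    refine h.congr fun n => ?_
    simp only [hmdef]; ring
  -- l0/c0 → ∞
  have hL0 : Tendsto (fun n => l0 n / c0 n) atTop atTop := by
    have h := hr0.pos_mul_atTop one_pos hc0
    refine h.congr' ?_
    filter_upwards [hc0.eventually_gt_atTop 0] with n hn
    field_simp
  -- l1/c1 - l0/c0 → 2μ
  have h2mu : Tendsto (fun n => l1 n / c1 n - l0 n / c0 n) atTop (nhds (2 * mu)) := by
    have h := hdrift.const_mul 2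
    refine h.congr fun n => ?_
    ring
  -- ratio r n = l1 c0 / (l0 c1) → 1
  have hratio : Tendsto (fun n => l1 n * c0 n / (l0 n * c1 n)) atTop (nhds 1) := by
    have hz : Tendsto (fun n => (l1 n / c1 n - l0 n / c0 n) / (l0 n / c0 n)) atTop (nhds 0) :=
      h2mu.div_atTop hL0
    have h1 : Tendsto (fun n => 1 + (l1 n / c1 n - l0 n / c0 n) / (l0 n / c0 n)) atTop
        (nhds 1) := by
      have := (tendsto_const_nhds (x := (1:ℝ)) (f := atTop)).add hz
      simpa using this
    refine h1.congr' ?_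
    filter_upwards [hc0.eventually_gt_atTop 0, hc1.eventually_gt_atTop 0,
      hl0.eventually_gt_atTop 0] with n h0 h1 h2
    field_simp
    ring
  -- exponential limits
  have hexp : ∀ y : ℝ, Tendsto (fun n => Real.exp (m n * y)) atTop
      (nhds (Real.exp (-2 * mu * y))) := fun y =>
    (Real.continuous_exp.tendsto _).comp (hmlim.mul_const y)
  -- numerator and denominator limits
  set A := Real.exp (-2 * mu * x)
  set B := Real.exp (-2 * mu * a)
  set C := Real.exp (-2 * mu * b)
  have hnum : Tendsto (fun n => (1/2) * ((l1 n * c0 n / (l0 n * c1 n) + 1) * Real.exp (m n * x)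
      - 2 * (l1 n * c0 n / (l0 n * c1 n)) * Real.exp (m n * a))) atTop
      (nhds ((1/2) * ((1 + 1) * A - 2 * 1 * B))) :=
    tendsto_const_nhds.mul (((hratio.add tendsto_const_nhds).mul (hexp x)).sub
      ((tendsto_const_nhds.mul hratio).mul (hexp a)))
  have hden : Tendsto (fun n => Real.exp (m n * b)
      - (l1 n * c0 n / (l0 n * c1 n)) * Real.exp (m n * a)) atTop (nhds (C - 1 * B)) :=
    (hexp b).sub (hratio.mul (hexp a))
  have hCB : C - 1 * B ≠ 0 := by
    rw [one_mul]
    intro h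
    have hBC : C = B := by linarith [sub_eq_zero.mp h]
    have := Real.exp_injective hBC
    have hb : b = a := by
      have h2 : (-2 * mu) ≠ 0 := by
        simp [hmu]
      exact mul_left_cancel₀ h2 this
    exact absurd hb hab.ne'
  have hmain := hnum.div hden hCB
  have hval : (1/2) * ((1 + 1) * A - 2 * 1 * B) / (C - 1 * B) = (A - B) / (C - B) := by
    ring_nf
  rw [hval] at hmain
  refine hmain.congr' ?_
  filter_upwards [hc1.eventually_gt_atTop 0, hl0.eventually_gt_atTop 0] with n h1 h0
  have hk : l0 n * c1 n ≠ 0 := by positivity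
  simp only [Pi.div_apply]
  have e3 : ∀ N D : ℝ, N / (l0 n * c1 n) / (D / (l0 n * c1 n)) = N / D := fun N D => by
    rw [div_div_div_comm, div_self hk, div_one]
  have e1 : (1/2) * ((l1 n * c0 n / (l0 n * c1 n) + 1) * Real.exp (m n * x)
      - 2 * (l1 n * c0 n / (l0 n * c1 n)) * Real.exp (m n * a))
      = ((1/2) * ((l1 n * c0 n + l0 n * c1 n) * Real.exp (m n * x)
        - 2 * l1 n * c0 n * Real.exp (m n * a))) / (l0 n * c1 n) := by
    field_simp
  have e2 : Real.exp (m n * b) - l1 n * c0 n / (l0 n * c1 n) * Real.exp (m n * a)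
      = (l0 n * c1 n * Real.exp (m n * b) - l1 n * c0 n * Real.exp (m n * a))
        / (l0 n * c1 n) := by
    field_simp
  rw [e1, e2, e3]
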